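/- For all nonnegative integers b, c with c ≤ b and every rational number x, Δ(x;b,c) = (-1)^{bc} · Δ'(x;b,c). -/

import Mathlib

open Finset

/-- Generalized binomial coefficient `C(x,k)`. -/
def gbinom (x : ℚ) (k : ℤ) : ℚ :=
  if 0 ≤ k then (∏ m ∈ Finset.range k.toNat, (x - m)) / (k.toNat.factorial : ℚ) else 0

/-- Shifted factorial `(a)_k` with integer index. -/
def poch (a : ℚ) (k : ℤ) : ℚ :=
  if 0 ≤ k then ∏ m ∈ Finset.range k.toNat, (a + m)
  else 1 / ∏ m ∈ Finset.range (-k).toNat, (a - (m + 1))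

/-- The matrix `M(x;b,c)`. -/
def Mmat (x : ℚ) (b c : ℕ) : Matrix (Fin (b + c)) (Fin (b + c)) ℚ := fun i j =>
  if (i : ℕ) < c then
    (if (j : ℕ) < b then gbinom (x + (j : ℕ)) ((i : ℕ) : ℤ)
     else gbinom (2 * x + (j : ℕ)) ((i : ℕ) : ℤ))
  else if (i : ℕ) < b then
    (if (j : ℕ) < c then 0
     else if (j : ℕ) < b then gbinom (x + (j : ℕ)) ((i : ℕ) : ℤ)
     else gbinom (2 * x + (j : ℕ)) ((i : ℕ) : ℤ))
  else
    (if (j : ℕ) < c then 2 * gbinom (x + (j : ℕ)) (((i : ℕ) : ℤ) - (b : ℤ))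
     else if (j : ℕ) < b then gbinom (x + (j : ℕ)) (((i : ℕ) : ℤ) - (b : ℤ))
     else 0)

/-- `Δ(x;b,c)`. -/
def Δdet (x : ℚ) (b c : ℕ) : ℚ := (Mmat x b c).det

/-- The matrix `M'(x;b,c)`; column index `j` of the paper is `c + j'`. -/
def M'mat (x : ℚ) (b c : ℕ) : Matrix (Fin b) (Fin b) ℚ := fun i j =>
  if c + (j : ℕ) < b then
    gbinom (x + (c : ℕ)) (((i : ℕ) : ℤ) - ((c : ℤ) + (j : ℕ)) + (c : ℤ))
  else if (i : ℕ) < c then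
    2 * gbinom (2 * x + (b : ℕ)) (((i : ℕ) : ℤ) - ((c : ℤ) + (j : ℕ)) + (b : ℤ))
  else
    gbinom (2 * x + (b : ℕ)) (((i : ℕ) : ℤ) - ((c : ℤ) + (j : ℕ)) + (b : ℤ))

/-- `Δ'(x;b,c)`. -/
def Δ'det (x : ℚ) (b c : ℕ) : ℚ := (M'mat x b c).det

lemma gbinom_neg (x : ℚ) {k : ℤ} (h : k < 0) : gbinom x k = 0 := by
  simp [gbinom, not_le.2 h]

lemma gbinom_zero (x : ℚ) : gbinom x 0 = 1 := by simp [gbinom]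

lemma gbinom_pascal (x : ℚ) (k : ℤ) :
    gbinom (x + 1) k = gbinom x k + gbinom x (k - 1) := by
  rcases lt_trichotomy k 0 with h | h | h
  · rw [gbinom_neg _ h, gbinom_neg _ h, gbinom_neg _ (by omega)]; ring
  · subst h
    rw [gbinom_zero, gbinom_zero, gbinom_neg x (by norm_num)]; ring
  · obtain ⟨n, rfl⟩ : ∃ n : ℕ, k = (n : ℤ) + 1 := ⟨(k - 1).toNat, by omega⟩
    have h1 : ((n : ℤ) + 1).toNat = n + 1 := by omega
    have h2 : ((n : ℤ) + 1 - 1).toNat = n := by omega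
    rw [gbinom, gbinom, gbinom, if_pos (by omega), if_pos (by omega), if_pos (by omega),
      h1, h2]
    have hA : ∏ m ∈ Finset.range (n + 1), (x + 1 - (m : ℚ))
        = (∏ m ∈ Finset.range n, (x - (m : ℚ))) * (x + 1) := by
      rw [Finset.prod_range_succ']
      congr 1
      · apply Finset.prod_congr rfl; intro m _; push_cast; ring
      · norm_num
    have hB : ∏ m ∈ Finset.range (n + 1), (x - (m : ℚ))
        = (∏ m ∈ Finset.range n, (x - (m : ℚ))) * (x - n) := Finset.prod_range_succ _ _
    rw [hA, hB, Nat.factorial_succ]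
    have hf : ((n.factorial : ℚ)) ≠ 0 := Nat.cast_ne_zero.2 n.factorial_ne_zero
    have hf2 : (((n+1) : ℕ) : ℚ) ≠ 0 := by positivity
    push_cast
    field_simp
    ring

lemma findiff (m : ℕ) : ∀ (y : ℚ) (k : ℤ),
    ∑ t ∈ range (m + 1), (-1 : ℚ) ^ t * (m.choose t : ℚ) * gbinom (y + t) k
      = (-1) ^ m * gbinom y (k - m) := by
  induction m with
  | zero => intro y k; simp
  | succ m ih =>
    intro y k
    have split : ∀ t, ((m + 1).choose (t + 1) : ℚ) = (m.choose t : ℚ) + (m.choose (t + 1) : ℚ) := by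
      intro t; rw [Nat.choose_succ_succ]; push_cast; ring
    rw [Finset.sum_range_succ' (fun t => (-1 : ℚ) ^ t * ((m + 1).choose t : ℚ) * gbinom (y + t) k) (m + 1)]
    have expand : ∀ t ∈ range (m + 1),
        (-1 : ℚ) ^ (t + 1) * ((m + 1).choose (t + 1) : ℚ) * gbinom (y + (t + 1 : ℕ)) k
        = -((-1 : ℚ) ^ t * (m.choose t : ℚ) * gbinom ((y + 1) + t) k)
          + (-1 : ℚ) ^ (t + 1) * (m.choose (t + 1) : ℚ) * gbinom (y + (t + 1 : ℕ)) k := by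
      intro t _
      rw [split t]
      have : (y + ((t : ℕ) + 1 : ℕ) : ℚ) = (y + 1) + (t : ℕ) := by push_cast; ring
      rw [this]; ring
    rw [Finset.sum_congr rfl expand, Finset.sum_add_distrib]
    have h1 : ∑ t ∈ range (m + 1),
        -((-1 : ℚ) ^ t * (m.choose t : ℚ) * gbinom ((y + 1) + t) k)
        = -((-1 : ℚ) ^ m * gbinom (y + 1) (k - m)) := by
      rw [Finset.sum_neg_distrib, ih (y + 1) k]
    have h2 : ∑ t ∈ range (m + 1),
        (-1 : ℚ) ^ (t + 1) * (m.choose (t + 1) : ℚ) * gbinom (y + (t + 1 : ℕ)) k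
        = (-1 : ℚ) ^ m * gbinom y (k - m) - gbinom y k := by
      have e1 : ∑ t ∈ range (m + 2), (-1 : ℚ) ^ t * (m.choose t : ℚ) * gbinom (y + t) k
          = (∑ t ∈ range (m + 1),
              (-1 : ℚ) ^ (t + 1) * (m.choose (t + 1) : ℚ) * gbinom (y + (t + 1 : ℕ)) k)
            + (-1 : ℚ) ^ 0 * (m.choose 0 : ℚ) * gbinom (y + (0 : ℕ)) k :=
        Finset.sum_range_succ' _ (m + 1)
      have e2 : ∑ t ∈ range (m + 2), (-1 : ℚ) ^ t * (m.choose t : ℚ) * gbinom (y + t) k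
          = (-1 : ℚ) ^ m * gbinom y (k - m) := by
        rw [Finset.sum_range_succ]
        simp only [Nat.choose_succ_self, Nat.cast_zero]
        rw [← ih y k]; ring
      rw [e2] at e1
      simp only [Nat.cast_zero, add_zero, Nat.choose_zero_right, Nat.cast_one, pow_zero,
        one_mul] at e1
      linarith
    rw [h1, h2]
    have hp : gbinom (y + 1) (k - m) = gbinom y (k - m) + gbinom y (k - m - 1) :=
      gbinom_pascal y (k - m)
    have hk : k - ((m : ℤ) + 1) = k - m - 1 := by ring
    push_cast
    rw [hk, hp]
    push_cast
    simp only [Nat.choose_zero_right, Nat.cast_one]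
    ring

lemma findiff' (m : ℕ) (y : ℚ) (k : ℤ) :
    ∑ s ∈ range (m + 1), (-1 : ℚ) ^ (m - s) * (m.choose s : ℚ) * gbinom (y + s) k
      = gbinom y (k - m) := by
  have h : ∀ s ∈ range (m + 1), (-1 : ℚ) ^ (m - s) * (m.choose s : ℚ) * gbinom (y + s) k
      = (-1 : ℚ) ^ m * ((-1 : ℚ) ^ s * (m.choose s : ℚ) * gbinom (y + s) k) := by
    intro s hs
    rw [Finset.mem_range] at hs
    have hsm : s ≤ m := by omega
    have : (-1 : ℚ) ^ (m - s) * (-1 : ℚ) ^ s = (-1 : ℚ) ^ m := by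
      rw [← pow_add, Nat.sub_add_cancel hsm]
    have h2 : (-1 : ℚ) ^ (m - s) = (-1 : ℚ) ^ m * (-1 : ℚ) ^ s := by
      have hs2 : ((-1 : ℚ) ^ s) * ((-1 : ℚ) ^ s) = 1 := by
        rw [← pow_add]
        exact Even.neg_one_pow ⟨s, rfl⟩
      calc (-1 : ℚ) ^ (m - s) = (-1 : ℚ) ^ (m - s) * (((-1 : ℚ) ^ s) * ((-1 : ℚ) ^ s)) := by
            rw [hs2]; ring
        _ = (-1 : ℚ) ^ m * (-1 : ℚ) ^ s := by rw [← mul_assoc, this]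
    rw [h2]; ring
  rw [Finset.sum_congr rfl h, ← Finset.mul_sum, findiff m y k, ← mul_assoc, ← pow_add]
  have : Even (m + m) := ⟨m, rfl⟩
  rw [this.neg_one_pow, one_mul]

lemma keysum (n lo m : ℕ) (F : ℕ → ℚ) (hn : lo + m < n) (a y : ℚ) (k : ℤ)
    (hF : ∀ s, s ≤ m → F (lo + s)
      = ((-1 : ℚ) ^ (m - s) * (m.choose s : ℚ)) * (a * gbinom (y + s) k))
    (h0 : ∀ t, t < lo ∨ lo + m < t → F t = 0) :
    ∑ t ∈ Finset.range n, F t = a * gbinom y (k - m) := by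
  have hsub : Finset.Ico lo (lo + m + 1) ⊆ Finset.range n := by
    intro t ht
    rw [Finset.mem_Ico] at ht
    rw [Finset.mem_range]
    omega
  rw [← Finset.sum_subset hsub (by
    intro t ht hnt
    rw [Finset.mem_range] at ht
    rw [Finset.mem_Ico] at hnt
    exact h0 t (by omega))]
  rw [Finset.sum_Ico_eq_sum_range]
  have hlen : lo + m + 1 - lo = m + 1 := by omega
  rw [hlen]
  have : ∀ s ∈ range (m + 1), F (lo + s)
      = a * ((-1 : ℚ) ^ (m - s) * (m.choose s : ℚ) * gbinom (y + s) k) := by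
    intro s hs
    rw [Finset.mem_range] at hs
    rw [hF s (by omega)]; ring
  rw [Finset.sum_congr rfl this, ← Finset.mul_sum, findiff' m y k]

def Ufun (b c : ℕ) (t j : ℕ) : ℚ :=
  if j < c then (if t ≤ j then (-1 : ℚ) ^ (j - t) * (j.choose t : ℚ) else 0)
  else if j < b then
    (if c ≤ t ∧ t ≤ j then (-1 : ℚ) ^ (j - t) * ((j - c).choose (t - c) : ℚ) else 0)
  else
    (if b ≤ t ∧ t ≤ j then (-1 : ℚ) ^ (j - t) * ((j - b).choose (t - b) : ℚ) else 0)

def Umat (b c : ℕ) : Matrix (Fin (b + c)) (Fin (b + c)) ℚ := fun t j => Ufun b c t j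

def Nfun (x : ℚ) (b c : ℕ) (i j : ℕ) : ℚ :=
  if j < c then
    (if i < c then gbinom x ((i : ℤ) - j)
     else if i < b then 0
     else 2 * gbinom x ((i : ℤ) - b - j))
  else if j < b then
    (if i < b then gbinom (x + c) ((i : ℤ) - j + c)
     else gbinom (x + c) ((i : ℤ) - b - j + c))
  else
    (if i < b then gbinom (2 * x + b) ((i : ℤ) - j + b) else 0)

def Nmat (x : ℚ) (b c : ℕ) : Matrix (Fin (b + c)) (Fin (b + c)) ℚ := fun i j => Nfun x b c i j

lemma mulMU (x : ℚ) (b c : ℕ) (hcb : c ≤ b) : Mmat x b c * Umat b c = Nmat x b c := by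
  ext i j
  rw [Matrix.mul_apply]
  set F : ℕ → ℚ := fun t =>
    if h : t < b + c then Mmat x b c i ⟨t, h⟩ * Ufun b c t j else 0 with hFdef
  have hconv : ∀ t : Fin (b + c), Mmat x b c i t * Umat b c t j = F (t : ℕ) := by
    intro t
    simp only [hFdef, Umat, t.isLt, dif_pos, Fin.eta]
  rw [Finset.sum_congr rfl (fun t _ => hconv t), Fin.sum_univ_eq_sum_range F (b + c)]
  have hjlt : (j : ℕ) < b + c := j.isLt
  have hilt : (i : ℕ) < b + c := i.isLt
  rcases lt_or_ge (j : ℕ) c with hj | hj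
  · -- case j < c
    have hres := keysum (b + c) 0 (j : ℕ) F (by omega)
      (if (i : ℕ) < c then 1 else if (i : ℕ) < b then 0 else 2) x
      (if (i : ℕ) < b then ((i : ℕ) : ℤ) else ((i : ℕ) : ℤ) - b)
      (by
        intro s hs
        have h : 0 + s < b + c := by omega
        rw [zero_add] at h ⊢
        simp only [hFdef]
        rw [dif_pos h]
        simp only [Mmat, Ufun, Fin.val_mk]
        rw [if_pos hj, if_pos (by omega : s ≤ (j : ℕ))]
        split_ifs <;> first | ring1 | (exfalso; omega)
      )
      (by
        intro t ht
        simp only [hFdef]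
        rcases lt_or_ge t (b + c) with h | h
        · rw [dif_pos h]
          simp only [Ufun]
          rw [if_pos hj, if_neg (by omega)]
          ring
        · rw [dif_neg (by omega)])
    rw [hres]
    simp only [Nmat, Nfun]
    rw [if_pos hj]
    split_ifs <;> first | ring1 | (exfalso; omega)
  · rcases lt_or_ge (j : ℕ) b with hjb | hjb
    · -- case c ≤ j < b
      have hres := keysum (b + c) c ((j : ℕ) - c) F (by omega) 1 (x + c)
        (if (i : ℕ) < b then ((i : ℕ) : ℤ) else ((i : ℕ) : ℤ) - b)
        (by
          intro s hs
          have h : c + s < b + c := by omega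
          simp only [hFdef]
          rw [dif_pos h]
          simp only [Mmat, Ufun, Fin.val_mk]
          have e1 : (j : ℕ) - (c + s) = ((j : ℕ) - c) - s := by omega
          have e2 : (c + s) - c = s := by omega
          have e3 : x + (((c + s : ℕ)) : ℚ) = (x + (c : ℚ)) + (s : ℚ) := by push_cast; ring
          simp only [e1, e2, e3]
          split_ifs <;> first | ring1 | (exfalso; omega))
        (by
          intro t ht
          simp only [hFdef]
          rcases lt_or_ge t (b + c) with h | h
          · rw [dif_pos h]
            simp only [Ufun]
            rw [if_neg (by omega), if_pos hjb, if_neg (by omega)]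
            ring
          · rw [dif_neg (by omega)])
      rw [hres]
      simp only [Nmat, Nfun]
      have e : ((((j : ℕ) - c : ℕ)) : ℤ) = (((j : ℕ) : ℤ)) - c := by omega
      rw [e]
      split_ifs <;> first | (exfalso; omega) | (rw [one_mul]; congr 1; omega)
    · -- case b ≤ j
      have hres := keysum (b + c) b ((j : ℕ) - b) F (by omega)
        (if (i : ℕ) < b then 1 else 0) (2 * x + b) ((i : ℕ) : ℤ)
        (by
          intro s hs
          have h : b + s < b + c := by omega
          simp only [hFdef]
          rw [dif_pos h]
          simp only [Mmat, Ufun, Fin.val_mk]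
          have e1 : (j : ℕ) - (b + s) = ((j : ℕ) - b) - s := by omega
          have e2 : (b + s) - b = s := by omega
          have e3 : 2 * x + (((b + s : ℕ)) : ℚ) = (2 * x + (b : ℚ)) + (s : ℚ) := by
            push_cast; ring
          simp only [e1, e2, e3]
          split_ifs <;> first | ring1 | (exfalso; omega))
        (by
          intro t ht
          simp only [hFdef]
          rcases lt_or_ge t (b + c) with h | h
          · rw [dif_pos h]
            simp only [Ufun]
            rw [if_neg (by omega), if_neg (by omega), if_neg (by omega)]
            ring
          · rw [dif_neg (by omega)])
      rw [hres]
      simp only [Nmat, Nfun]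
      have e : ((((j : ℕ) - b : ℕ)) : ℤ) = (((j : ℕ) : ℤ)) - b := by omega
      rw [e]
      split_ifs <;> first | (exfalso; omega) | ring1 | (rw [one_mul]; congr 1; omega)

def Efun (b : ℕ) (i t : ℕ) : ℚ := if i = t then 1 else if t + b = i then -2 else 0

def Emat (b c : ℕ) : Matrix (Fin (b + c)) (Fin (b + c)) ℚ := fun i t => Efun b i t

def N'fun (x : ℚ) (b c : ℕ) (i j : ℕ) : ℚ :=
  if i < b then Nfun x b c i j
  else if j < c then 0
  else if j < b then -(gbinom (x + c) ((i : ℤ) - b - j + c))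
  else -2 * gbinom (2 * x + b) ((i : ℤ) - b - j + b)

def N'mat (x : ℚ) (b c : ℕ) : Matrix (Fin (b + c)) (Fin (b + c)) ℚ := fun i j => N'fun x b c i j

lemma detU (b c : ℕ) : (Umat b c).det = 1 := by
  have h : (Umat b c).BlockTriangular id := by
    intro i j hij
    have hij' : (j : ℕ) < (i : ℕ) := hij
    simp only [Umat, Ufun]
    split_ifs <;> first | rfl | (exfalso; omega)
  rw [Matrix.det_of_upperTriangular h]
  apply Finset.prod_eq_one
  intro j _
  simp only [Umat, Ufun]
  split_ifs <;> first | (exfalso; omega) | (simp [Nat.sub_self])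

lemma detE (b c : ℕ) : (Emat b c).det = 1 := by
  have h : (Emat b c).BlockTriangular OrderDual.toDual := by
    intro i j hij
    have hij' : (i : ℕ) < (j : ℕ) := hij
    simp only [Emat, Efun]
    rw [if_neg (by omega), if_neg (by omega)]
  rw [Matrix.det_of_lowerTriangular _ h]
  apply Finset.prod_eq_one
  intro j _
  simp [Emat, Efun]

lemma mulEN (x : ℚ) (b c : ℕ) (hcb : c ≤ b) :
    Emat b c * Nmat x b c = N'mat x b c := by
  ext i j
  rw [Matrix.mul_apply]
  rcases lt_or_ge (i : ℕ) b with hi | hi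
  · rw [Finset.sum_eq_single i]
    · simp [Emat, Efun, Nmat, N'mat, N'fun, if_pos hi]
    · intro t _ ht
      simp only [Emat, Efun]
      rw [if_neg (fun hh => ht (Fin.ext hh.symm)), if_neg (by omega), zero_mul]
    · intro h; exact absurd (Finset.mem_univ i) h
  · have hc : 0 < c := by omega
    have hb : 0 < b := by omega
    have hib : (i : ℕ) - b < b + c := by omega
    set t₀ : Fin (b + c) := ⟨(i : ℕ) - b, hib⟩ with ht₀
    have hne : t₀ ≠ i := by
      intro hh
      have : (i : ℕ) - b = (i : ℕ) := congrArg Fin.val hh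
      omega
    rw [← Finset.add_sum_erase _ _ (Finset.mem_univ i)]
    have herase : ∑ t ∈ Finset.univ.erase i, Emat b c i t * Nmat x b c t j
        = Emat b c i t₀ * Nmat x b c t₀ j := by
      apply Finset.sum_eq_single_of_mem
      · exact Finset.mem_erase.2 ⟨hne, Finset.mem_univ _⟩
      · intro t ht hnt
        have ht' : t ≠ i := (Finset.mem_erase.1 ht).1
        simp only [Emat, Efun]
        rw [if_neg (by
          intro hh
          exact ht' (Fin.ext hh.symm)), if_neg (by
          intro hh
          apply hnt
          apply Fin.ext
          simp only [ht₀]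
          omega), zero_mul]
    rw [herase]
    have hE1 : Emat b c i i = 1 := by simp [Emat, Efun]
    have hE2 : Emat b c i t₀ = -2 := by
      simp only [Emat, Efun, ht₀]
      rw [if_neg (by omega), if_pos (by omega)]
    rw [hE1, hE2, one_mul]
    simp only [Nmat, N'mat, Nfun, N'fun, ht₀, Fin.val_mk]
    have e : ((((i : ℕ) - b : ℕ)) : ℤ) = ((i : ℕ) : ℤ) - b := by omega
    rw [e]
    split_ifs <;> first | (exfalso; omega) | ring1

def blockEquiv (b c : ℕ) : Fin c ⊕ Fin b ≃ Fin (b + c) :=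
  finSumFinEquiv.trans (finCongr (Nat.add_comm c b))

lemma blockEquiv_inl (b c : ℕ) (i : Fin c) : ((blockEquiv b c (Sum.inl i)) : ℕ) = (i : ℕ) := by
  simp [blockEquiv]

lemma blockEquiv_inr (b c : ℕ) (i : Fin b) :
    ((blockEquiv b c (Sum.inr i)) : ℕ) = c + (i : ℕ) := by
  simp [blockEquiv]; omega

def Amat (x : ℚ) (c : ℕ) : Matrix (Fin c) (Fin c) ℚ :=
  fun i j => gbinom x (((i : ℕ) : ℤ) - ((j : ℕ) : ℤ))

def Bmat (x : ℚ) (b c : ℕ) : Matrix (Fin c) (Fin b) ℚ :=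
  fun i j => N'fun x b c (i : ℕ) (c + (j : ℕ))

def Dmat (x : ℚ) (b c : ℕ) : Matrix (Fin b) (Fin b) ℚ :=
  fun i j => N'fun x b c (c + (i : ℕ)) (c + (j : ℕ))

lemma blockN' (x : ℚ) (b c : ℕ) (hcb : c ≤ b) :
    (N'mat x b c).submatrix (blockEquiv b c) (blockEquiv b c)
      = Matrix.fromBlocks (Amat x c) (Bmat x b c) 0 (Dmat x b c) := by
  ext i j
  cases i with
  | inl i =>
    cases j with
    | inl j =>
      simp only [Matrix.submatrix_apply, Matrix.fromBlocks_apply₁₁, N'mat]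
      rw [N'fun]
      rw [if_pos (by rw [blockEquiv_inl]; omega)]
      rw [Nfun]
      rw [if_pos (by rw [blockEquiv_inl]; omega)]
      rw [if_pos (by rw [blockEquiv_inl]; omega)]
      simp [blockEquiv_inl, Amat]
    | inr j =>
      simp only [Matrix.submatrix_apply, Matrix.fromBlocks_apply₁₂, N'mat, Bmat]
      rw [blockEquiv_inl, blockEquiv_inr]
  | inr i =>
    cases j with
    | inl j =>
      simp only [Matrix.submatrix_apply, Matrix.fromBlocks_apply₂₁, N'mat,
        Matrix.zero_apply]
      rw [N'fun]
      rcases lt_or_ge (c + (i : ℕ)) b with h | h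
      · rw [if_pos (by rw [blockEquiv_inr]; omega)]
        rw [Nfun]
        rw [if_pos (by rw [blockEquiv_inl]; omega)]
        rw [if_neg (by rw [blockEquiv_inr]; omega)]
        rw [if_pos (by rw [blockEquiv_inr]; omega)]
      · rw [if_neg (by rw [blockEquiv_inr]; omega)]
        rw [if_pos (by rw [blockEquiv_inl]; omega)]
    | inr j =>
      simp only [Matrix.submatrix_apply, Matrix.fromBlocks_apply₂₂, N'mat, Dmat]
      rw [blockEquiv_inr, blockEquiv_inr]

lemma detA (x : ℚ) (c : ℕ) : (Amat x c).det = 1 := by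
  have h : (Amat x c).BlockTriangular OrderDual.toDual := by
    intro i j hij
    have hij' : (i : ℕ) < (j : ℕ) := hij
    exact gbinom_neg _ (by omega)
  rw [Matrix.det_of_lowerTriangular _ h]
  apply Finset.prod_eq_one
  intro j _
  simp only [Amat, sub_self, gbinom_zero]

lemma Dmat_eq (x : ℚ) (b c : ℕ) (hcb : c ≤ b) (σ : Equiv.Perm (Fin b))
    (hσ : ∀ i : Fin b, ((σ i) : ℕ) = ((i : ℕ) + c) % b) :
    Dmat x b c = Matrix.of fun (i j : Fin b) =>
      (if (i : ℕ) < b - c then 1 else -1) *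
        ((M'mat x b c).submatrix σ id) i j := by
  ext i j
  simp only [Matrix.of_apply, Matrix.submatrix_apply, id_eq, Dmat, N'fun, Nfun, M'mat]
  rcases lt_or_ge (i : ℕ) (b - c) with hi | hi
  · have hv : ((σ i : Fin b) : ℕ) = c + (i : ℕ) := by
      rw [hσ i, Nat.mod_eq_of_lt (by omega)]; omega
    have hv' : (((σ i : Fin b) : ℕ) : ℤ) = (c : ℤ) + ((i : ℕ) : ℤ) := by omega
    split_ifs <;> first | (exfalso; omega) | (simp only [hv']; push_cast; ring_nf)
  · have hb0 : 0 < b := by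
      rcases Nat.eq_zero_or_pos b with h | h
      · exact absurd i.isLt (by omega)
      · exact h
    have hv : ((σ i : Fin b) : ℕ) + b = c + (i : ℕ) := by
      have h1 : ((i : ℕ) + c) % b = (i : ℕ) + c - b := by
        rw [Nat.mod_eq_sub_mod (by omega), Nat.mod_eq_of_lt (by omega)]
      rw [hσ i, h1]; omega
    have hv' : (((σ i : Fin b) : ℕ) : ℤ) = (c : ℤ) + ((i : ℕ) : ℤ) - (b : ℤ) := by omega
    split_ifs <;> first | (exfalso; omega) | (simp only [hv']; push_cast; ring_nf)

open Fin.NatCast in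
lemma rot_pow (n : ℕ) (cc : ℕ) : ∀ i : Fin (n + 1),
    ((finRotate (n + 1)) ^ cc) i = i + (cc : Fin (n + 1)) := by
  induction cc with
  | zero => intro i; simp
  | succ m ih =>
    intro i
    rw [pow_succ, Equiv.Perm.mul_apply, finRotate_succ_apply, ih (i + 1)]
    push_cast
    rw [add_assoc, add_comm (1 : Fin (n + 1))]

open Fin.NatCast in
lemma rot_pow_val (n : ℕ) (cc : ℕ) (i : Fin (n + 1)) :
    (((finRotate (n + 1)) ^ cc) i : ℕ) = ((i : ℕ) + cc) % (n + 1) := by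
  rw [rot_pow, Fin.add_def]
  simp [Nat.add_mod_mod]

lemma prod_eps (b c : ℕ) (hcb : c ≤ b) :
    (∏ i : Fin b, (if (i : ℕ) < b - c then (1 : ℚ) else -1)) = (-1) ^ c := by
  rw [Fin.prod_univ_eq_prod_range (fun i => if i < b - c then (1 : ℚ) else -1) b]
  rw [← Finset.prod_range_mul_prod_Ico _ (show b - c ≤ b by omega)]
  have h1 : ∏ i ∈ Finset.range (b - c), (if i < b - c then (1 : ℚ) else -1) = 1 := by
    apply Finset.prod_eq_one
    intro i hi
    rw [Finset.mem_range] at hi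
    rw [if_pos hi]
  have h2 : ∏ i ∈ Finset.Ico (b - c) b, (if i < b - c then (1 : ℚ) else -1) = (-1) ^ c :=
    calc ∏ i ∈ Finset.Ico (b - c) b, (if i < b - c then (1 : ℚ) else -1)
        = ∏ _i ∈ Finset.Ico (b - c) b, (-1 : ℚ) :=
          Finset.prod_congr rfl (fun i hi => by
            rw [Finset.mem_Ico] at hi
            rw [if_neg (by omega)])
      _ = (-1) ^ c := by
          rw [Finset.prod_const, Nat.card_Ico]
          congr 1
          omega
  rw [h1, h2, one_mul]

/-- Equation (2.4): `Δ(x;b,c) = (-1)^{bc} Δ'(x;b,c)`. -/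
theorem delta_eq_delta' (b c : ℕ) (hcb : c ≤ b) (x : ℚ) :
    Δdet x b c = (-1 : ℚ) ^ (b * c) * Δ'det x b c := by
  rcases Nat.eq_zero_or_pos b with hb0 | hb0
  · have hc0 : c = 0 := by omega
    subst hb0; subst hc0
    simp [Δdet, Δ'det, Matrix.det_isEmpty]
  obtain ⟨n, rfl⟩ : ∃ n, b = n + 1 := ⟨b - 1, by omega⟩
  set σ : Equiv.Perm (Fin (n + 1)) := (finRotate (n + 1)) ^ c with hσdef
  have hσ : ∀ i : Fin (n + 1), ((σ i) : ℕ) = ((i : ℕ) + c) % (n + 1) := fun i =>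
    rot_pow_val n c i
  have h1 : Δdet x (n + 1) c = (Nmat x (n + 1) c).det := by
    rw [Δdet, ← mulMU x (n + 1) c hcb, Matrix.det_mul, detU, mul_one]
  have h2 : (Nmat x (n + 1) c).det = (N'mat x (n + 1) c).det := by
    rw [← mulEN x (n + 1) c hcb, Matrix.det_mul, detE, one_mul]
  have h3 : (N'mat x (n + 1) c).det = (Dmat x (n + 1) c).det := by
    rw [← Matrix.det_submatrix_equiv_self (blockEquiv (n + 1) c) (N'mat x (n + 1) c),
      blockN' x (n + 1) c hcb, Matrix.det_fromBlocks_zero₂₁, detA, one_mul]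
  have h4 : (Dmat x (n + 1) c).det
      = (-1 : ℚ) ^ c * ((M'mat x (n + 1) c).submatrix σ id).det := by
    rw [Dmat_eq x (n + 1) c hcb σ hσ, Matrix.det_mul_column, prod_eps (n + 1) c hcb]
  have h5 := Matrix.det_permute σ (M'mat x (n + 1) c)
  have hsign : ((Equiv.Perm.sign σ : ℤ) : ℚ) = (-1 : ℚ) ^ (n * c) := by
    rw [hσdef, map_pow, sign_finRotate]
    push_cast
    rw [← pow_mul]
  rw [h1, h2, h3, h4, h5, Δ'det]
  rw [show ((Equiv.Perm.sign σ : ℤ) : ℚ) = (-1 : ℚ) ^ (n * c) from hsign]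
  rw [← mul_assoc, ← pow_add]
  congr 1
  ring
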